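/- arXiv:0809.3653 — 3 statements merged into one kernel-verified Lean document; each statement's English description precedes it below -/
import Mathlib

section
/- Let p_z be any real number with 0 < p_z < 1/2. Then there exist an integer n ≥ 2 and substitution probabilities q ∈ (0,1/2) and p_y ∈ (0,1/2) such that for the rooted binary tree T whose root ρ has a single leaf z attached by an edge of substitution probability p_z and a balanced binary subtree T_Y of depth n (substitution probability q on every edge) attached by an edge of substitution probability p_y, the following hold: (1) the substitution probability from ρ to z is p_z; (2) RA(X \ {ز}) = RA(Y) > RA(X), where X = Y ∪ {z} and Y is the leaf set of T_Y; and (3) for every leaf v ≠ z, the net substitution probability from ρ to v, namely (1 − (1−2p_y)(1−2q)^n)/2, is strictly greater than p_z. -/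
/-!
Model: rooted binary phylogenetic trees whose edges carry substitution
probabilities, evolving binary characters (states `true` = α, `false` = β)
under the two-state symmetric (Neyman) model, and Fitch's maximum parsimony
algorithm.
-/

/-- A rooted binary tree; an internal node records the substitution
probabilities on the edges to its two children. -/
inductive PTree where
  | leaf : PTree
  | node (p₁ p₂ : ℝ) (t₁ t₂ : PTree) : PTree

/-- The type of binary characters on a tree: an assignment of a state
(`true` = α, `false` = β) to each leaf. -/
def PTree.Char : PTree → Type
  | .leaf => Bool
  | .node _ _ t₁ t₂ => t₁.Char × t₂.Char

instance PTree.Char.instFintype : (t : PTree) → Fintype t.Char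
  | .leaf => inferInstanceAs (Fintype Bool)
  | .node _ _ t₁ t₂ =>
      letI := PTree.Char.instFintype t₁
      letI := PTree.Char.instFintype t₂
      inferInstanceAs (Fintype (_ × _))

instance PTree.Char.instDecidableEq : (t : PTree) → DecidableEq t.Char
  | .leaf => inferInstanceAs (DecidableEq Bool)
  | .node _ _ t₁ t₂ =>
      letI := PTree.Char.instDecidableEq t₁
      letI := PTree.Char.instDecidableEq t₂
      inferInstanceAs (DecidableEq (_ × _))

/-- Single-edge transition probability of the two-state symmetric model:
conditional on the parent being in state `s`, the child is in state `s'`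
with probability `1 - p` if `s' = s` and `p` otherwise. -/
def transProb (p : ℝ) (s s' : Bool) : ℝ := if s' = s then 1 - p else p

/-- `t.charProb s c` is the probability that the character `c` is generated
at the leaves of `t` conditional on the root of `t` being in state `s`
(substitutions happen independently across edges). -/
def PTree.charProb : (t : PTree) → Bool → t.Char → ℝ
  | .leaf, s, c => @ite _ (c = s) (instDecidableEqBool c s) 1 0
  | .node p₁ p₂ t₁ t₂, s, c =>
      (∑ s₁ : Bool, transProb p₁ s s₁ * t₁.charProb s₁ c.1) *
      (∑ s₂ : Bool, transProb p₂ s s₂ * t₂.charProb s₂ c.2)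

/-- The state set assigned to the root by Fitch's maximum parsimony
algorithm: a leaf in state `s` gets `{s}`; an internal node gets the
intersection of the children's state sets if nonempty, else their union. -/
def PTree.fitch : (t : PTree) → t.Char → Finset Bool
  | .leaf, c => {c}
  | .node _ _ t₁ t₂, c =>
      if (t₁.fitch c.1 ∩ t₂.fitch c.2).Nonempty then t₁.fitch c.1 ∩ t₂.fitch c.2
      else t₁.fitch c.1 ∪ t₂.fitch c.2

/-- `P_α`: probability, conditional on the root being in state α, that MP
returns the state set `{α}`. -/
noncomputable def PTree.probAlpha (t : PTree) : ℝ :=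
  ∑ c : t.Char, if t.fitch c = {true} then t.charProb true c else 0

/-- `P_β`: probability, conditional on the root being in state α, that MP
returns the state set `{β}`. -/
noncomputable def PTree.probBeta (t : PTree) : ℝ :=
  ∑ c : t.Char, if t.fitch c = {false} then t.charProb true c else 0

/-- `P_{αβ}`: probability, conditional on the root being in state α, that MP
returns the state set `{α, β}`. -/
noncomputable def PTree.probBoth (t : PTree) : ℝ :=
  ∑ c : t.Char, if t.fitch c = ({true, false} : Finset Bool) then t.charProb true c else 0

/-- The reconstruction accuracy `RA = UA + AA/2` of maximum parsimony on all
leaves of `t`, the conditioning root state being the root of `t` itself. -/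
noncomputable def PTree.RA (t : PTree) : ℝ := t.probAlpha + t.probBoth / 2

/-- Probability of the character `c` on `t` conditional on the state `s` of an
ancestor vertex joined to the root of `t` by an edge of substitution
probability `p`. -/
noncomputable def PTree.charProbVia (t : PTree) (p : ℝ) (s : Bool) (c : t.Char) : ℝ :=
  ∑ s' : Bool, transProb p s s' * t.charProb s' c

/-- Reconstruction accuracy of MP applied to the subtree `t` (rooted at `y`),
where the ancestral state being estimated is that of a vertex `ρ` joined to
`y` by an edge of substitution probability `p`:
`RA = P(MP = {α} | ρ = α) + (1/2)·P(MP = {α,β} | ρ = α)`. -/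
noncomputable def PTree.RAVia (t : PTree) (p : ℝ) : ℝ :=
  (∑ c : t.Char, if t.fitch c = {true} then t.charProbVia p true c else 0) +
  (∑ c : t.Char, if t.fitch c = ({true, false} : Finset Bool) then t.charProbVia p true c else 0) / 2

/-- All edge substitution probabilities lie in `[0, 1/2]`. -/
def PTree.valid : PTree → Prop
  | .leaf => True
  | .node p₁ p₂ t₁ t₂ => 0 ≤ p₁ ∧ p₁ ≤ 1/2 ∧ 0 ≤ p₂ ∧ p₂ ≤ 1/2 ∧ t₁.valid ∧ t₂.valid

/-- The list of net substitution probabilities from the root to each leaf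
(obtained by chaining the single-edge substitution probabilities). -/
def PTree.leafFlipProbs : PTree → List ℝ
  | .leaf => [0]
  | .node p₁ p₂ t₁ t₂ =>
      (t₁.leafFlipProbs.map fun r => (1 - p₁) * r + p₁ * (1 - r)) ++
      (t₂.leafFlipProbs.map fun r => (1 - p₂) * r + p₂ * (1 - r))

/-- The balanced binary tree of depth `n` with substitution probability `q`
on every edge. -/
def balanced (q : ℝ) : ℕ → PTree
  | 0 => .leaf
  | n + 1 => .node q q (balanced q n) (balanced q n)

/-- `P_α(n,q)` for the balanced tree of depth `n`. -/
noncomputable def Palpha (n : ℕ) (q : ℝ) : ℝ := (balanced q n).probAlpha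

/-- `P_β(n,q)` for the balanced tree of depth `n`. -/
noncomputable def Pbeta (n : ℕ) (q : ℝ) : ℝ := (balanced q n).probBeta

/-- `P_{αβ}(n,q)` for the balanced tree of depth `n`. -/
noncomputable def Palphabeta (n : ℕ) (q : ℝ) : ℝ := (balanced q n).probBoth



def PTree.flip : (t : PTree) → t.Char → t.Char
  | .leaf, c => !c
  | .node _ _ t₁ t₂, c => (t₁.flip c.1, t₂.flip c.2)

lemma PTree.flip_flip : (t : PTree) → ∀ c, t.flip (t.flip c) = c
  | .leaf, c => Bool.not_not c
  | .node _ _ t₁ t₂, c => Prod.ext (t₁.flip_flip c.1) (t₂.flip_flip c.2)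

lemma PTree.charProb_flip : (t : PTree) → ∀ s c, t.charProb s (t.flip c) = t.charProb (!s) c
  | .leaf, s, c => by
      cases s <;> cases c <;> simp [PTree.charProb, PTree.flip] <;> rfl
  | .node p₁ p₂ t₁ t₂, s, c => by
      simp only [PTree.charProb, PTree.flip, Fintype.sum_bool]
      rw [t₁.charProb_flip, t₂.charProb_flip, t₁.charProb_flip, t₂.charProb_flip]
      cases s <;> simp [transProb] <;> ring

lemma PTree.fitch_flip : (t : PTree) → ∀ c, t.fitch (t.flip c) = (t.fitch c).image Bool.not
  | .leaf, c => by cases c <;> decide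
  | .node p₁ p₂ t₁ t₂, c => by
      have hinj : Function.Injective Bool.not := fun a b => by cases a <;> cases b <;> simp
      simp only [PTree.fitch, PTree.flip, t₁.fitch_flip, t₂.fitch_flip,
        ← Finset.image_inter _ _ hinj]
      by_cases h : (t₁.fitch c.1 ∩ t₂.fitch c.2).Nonempty <;>
        simp [h, Finset.image_union]

lemma PTree.sum_flip (t : PTree) (f : t.Char → ℝ) : ∑ c, f (t.flip c) = ∑ c, f c :=
  Fintype.sum_bijective t.flip (Function.Involutive.bijective t.flip_flip) _ _ (fun _ => rfl)

lemma PTree.fitch_values : (t : PTree) → ∀ c,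
    t.fitch c = {true} ∨ t.fitch c = {false} ∨ t.fitch c = {true, false}
  | .leaf, c => by cases c <;> decide
  | .node p₁ p₂ t₁ t₂, c => by
      rcases t₁.fitch_values c.1 with h | h | h <;> rcases t₂.fitch_values c.2 with g | g | g <;>
        rw [PTree.fitch, h, g] <;> decide
noncomputable def PTree.w (t : PTree) (S : Finset Bool) (s : Bool) : ℝ :=
  ∑ c : t.Char, if t.fitch c = S then t.charProb s c else 0

noncomputable def PTree.wv (t : PTree) (p : ℝ) (S : Finset Bool) (s : Bool) : ℝ :=
  ∑ c : t.Char, if t.fitch c = S then t.charProbVia p s c else 0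

lemma imgnot : ∀ A B : Finset Bool, (A.image Bool.not = B) ↔ (A = B.image Bool.not) := by decide

lemma PTree.w_false (t : PTree) (S : Finset Bool) : t.w S false = t.w (S.image Bool.not) true := by
  unfold PTree.w
  rw [← t.sum_flip (fun c => if t.fitch c = S then t.charProb false c else 0)]
  refine Finset.sum_congr rfl fun c _ => ?_
  simp only [t.fitch_flip, t.charProb_flip, Bool.not_false, imgnot]

lemma PTree.wv_true (t : PTree) (p : ℝ) (S : Finset Bool) :
    t.wv p S true = (1 - p) * t.w S true + p * t.w (S.image Bool.not) true := by
  rw [← t.w_false]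
  unfold PTree.wv PTree.w PTree.charProbVia
  simp only [Fintype.sum_bool, transProb]
  rw [Finset.mul_sum, Finset.mul_sum, ← Finset.sum_add_distrib]
  refine Finset.sum_congr rfl fun c _ => ?_
  by_cases h : t.fitch c = S <;> simp [h] <;> ring

lemma PTree.wvT (t : PTree) (p : ℝ) :
    t.wv p {true} true = (1 - p) * t.w {true} true + p * t.w {false} true := by
  rw [t.wv_true]; congr 2 <;> decide

lemma PTree.wvF (t : PTree) (p : ℝ) :
    t.wv p {false} true = (1 - p) * t.w {false} true + p * t.w {true} true := by
  rw [t.wv_true]; congr 2 <;> decide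

lemma PTree.wvB (t : PTree) (p : ℝ) :
    t.wv p {true, false} true = t.w {true, false} true := by
  rw [t.wv_true, show (({true, false} : Finset Bool).image Bool.not) = {true, false} by decide]
  ring

private lemma combineT (F₁ F₂ : Finset Bool)
    (h₁ : F₁ = {true} ∨ F₁ = {false} ∨ F₁ = {true, false})
    (h₂ : F₂ = {true} ∨ F₂ = {false} ∨ F₂ = {true, false}) (x y : ℝ) :
    (if (if (F₁ ∩ F₂).Nonempty then F₁ ∩ F₂ else F₁ ∪ F₂) = {true} then x * y else 0) =
      (if F₁ = {true} then x else 0) * (if F₂ = {true} then y else 0)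
      + (if F₁ = {true} then x else 0) * (if F₂ = ({true, false} : Finset Bool) then y else 0)
      + (if F₁ = ({true, false} : Finset Bool) then x else 0) * (if F₂ = {true} then y else 0) := by
  rcases h₁ with h | h | h <;> rcases h₂ with g | g | g <;> subst h <;> subst g <;>
    simp (config := { decide := true }) <;> ring

private lemma combineF (F₁ F₂ : Finset Bool)
    (h₁ : F₁ = {true} ∨ F₁ = {false} ∨ F₁ = {true, false})
    (h₂ : F₂ = {true} ∨ F₂ = {false} ∨ F₂ = {true, false}) (x y : ℝ) :
    (if (if (F₁ ∩ F₂).Nonempty then F₁ ∩ F₂ else F₁ ∪ F₂) = {false} then x * y else 0) =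
      (if F₁ = {false} then x else 0) * (if F₂ = {false} then y else 0)
      + (if F₁ = {false} then x else 0) * (if F₂ = ({true, false} : Finset Bool) then y else 0)
      + (if F₁ = ({true, false} : Finset Bool) then x else 0) * (if F₂ = {false} then y else 0) := by
  rcases h₁ with h | h | h <;> rcases h₂ with g | g | g <;> subst h <;> subst g <;>
    simp (config := { decide := true }) <;> ring

private lemma combineB (F₁ F₂ : Finset Bool)
    (h₁ : F₁ = {true} ∨ F₁ = {false} ∨ F₁ = {true, false})
    (h₂ : F₂ = {true} ∨ F₂ = {false} ∨ F₂ = {true, false}) (x y : ℝ) :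
    (if (if (F₁ ∩ F₂).Nonempty then F₁ ∩ F₂ else F₁ ∪ F₂) = ({true, false} : Finset Bool) then x * y else 0) =
      (if F₁ = ({true, false} : Finset Bool) then x else 0) * (if F₂ = ({true, false} : Finset Bool) then y else 0)
      + (if F₁ = {true} then x else 0) * (if F₂ = {false} then y else 0)
      + (if F₁ = {false} then x else 0) * (if F₂ = {true} then y else 0) := by
  rcases h₁ with h | h | h <;> rcases h₂ with g | g | g <;> subst h <;> subst g <;>
    simp (config := { decide := true }) <;> ring

lemma PTree.w_nodeT (p₁ p₂ : ℝ) (t₁ t₂ : PTree) :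
    (PTree.node p₁ p₂ t₁ t₂).w {true} true =
      t₁.wv p₁ {true} true * t₂.wv p₂ {true} true
      + t₁.wv p₁ {true} true * t₂.wv p₂ {true, false} true
      + t₁.wv p₁ {true, false} true * t₂.wv p₂ {true} true := by
  unfold PTree.w PTree.wv
  rw [show (∑ c : (PTree.node p₁ p₂ t₁ t₂).Char,
        if (PTree.node p₁ p₂ t₁ t₂).fitch c = {true} then (PTree.node p₁ p₂ t₁ t₂).charProb true c else 0)
      = ∑ c₁ : t₁.Char, ∑ c₂ : t₂.Char,
        if (PTree.node p₁ p₂ t₁ t₂).fitch (c₁, c₂) = {true} then (PTree.node p₁ p₂ t₁ t₂).charProb true (c₁, c₂) else 0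
      from Fintype.sum_prod_type _]
  have key : ∀ (c₁ : t₁.Char) (c₂ : t₂.Char),
      (if (PTree.node p₁ p₂ t₁ t₂).fitch (c₁, c₂) = {true}
        then (PTree.node p₁ p₂ t₁ t₂).charProb true (c₁, c₂) else 0)
      = (if t₁.fitch c₁ = {true} then t₁.charProbVia p₁ true c₁ else 0)
          * (if t₂.fitch c₂ = {true} then t₂.charProbVia p₂ true c₂ else 0)
        + (if t₁.fitch c₁ = {true} then t₁.charProbVia p₁ true c₁ else 0)
          * (if t₂.fitch c₂ = ({true, false} : Finset Bool) then t₂.charProbVia p₂ true c₂ else 0)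
        + (if t₁.fitch c₁ = ({true, false} : Finset Bool) then t₁.charProbVia p₁ true c₁ else 0)
          * (if t₂.fitch c₂ = {true} then t₂.charProbVia p₂ true c₂ else 0) := fun c₁ c₂ =>
    combineT _ _ (t₁.fitch_values c₁) (t₂.fitch_values c₂) _ _
  simp only [key, Finset.sum_add_distrib, ← Finset.mul_sum, ← Finset.sum_mul]
lemma PTree.w_nodeF (p₁ p₂ : ℝ) (t₁ t₂ : PTree) :
    (PTree.node p₁ p₂ t₁ t₂).w {false} true =
      t₁.wv p₁ {false} true * t₂.wv p₂ {false} true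
      + t₁.wv p₁ {false} true * t₂.wv p₂ {true, false} true
      + t₁.wv p₁ {true, false} true * t₂.wv p₂ {false} true := by
  unfold PTree.w PTree.wv
  rw [show (∑ c : (PTree.node p₁ p₂ t₁ t₂).Char,
        if (PTree.node p₁ p₂ t₁ t₂).fitch c = {false} then (PTree.node p₁ p₂ t₁ t₂).charProb true c else 0)
      = ∑ c₁ : t₁.Char, ∑ c₂ : t₂.Char,
        if (PTree.node p₁ p₂ t₁ t₂).fitch (c₁, c₂) = {false} then (PTree.node p₁ p₂ t₁ t₂).charProb true (c₁, c₂) else 0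
      from Fintype.sum_prod_type _]
  have key : ∀ (c₁ : t₁.Char) (c₂ : t₂.Char),
      (if (PTree.node p₁ p₂ t₁ t₂).fitch (c₁, c₂) = {false}
        then (PTree.node p₁ p₂ t₁ t₂).charProb true (c₁, c₂) else 0)
      = (if t₁.fitch c₁ = {false} then t₁.charProbVia p₁ true c₁ else 0)
          * (if t₂.fitch c₂ = {false} then t₂.charProbVia p₂ true c₂ else 0)
        + (if t₁.fitch c₁ = {false} then t₁.charProbVia p₁ true c₁ else 0)
          * (if t₂.fitch c₂ = ({true, false} : Finset Bool) then t₂.charProbVia p₂ true c₂ else 0)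
        + (if t₁.fitch c₁ = ({true, false} : Finset Bool) then t₁.charProbVia p₁ true c₁ else 0)
          * (if t₂.fitch c₂ = {false} then t₂.charProbVia p₂ true c₂ else 0) := fun c₁ c₂ =>
    combineF _ _ (t₁.fitch_values c₁) (t₂.fitch_values c₂) _ _
  simp only [key, Finset.sum_add_distrib, ← Finset.mul_sum, ← Finset.sum_mul]

lemma PTree.w_nodeB (p₁ p₂ : ℝ) (t₁ t₂ : PTree) :
    (PTree.node p₁ p₂ t₁ t₂).w {true, false} true =
      t₁.wv p₁ {true, false} true * t₂.wv p₂ {true, false} true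
      + t₁.wv p₁ {true} true * t₂.wv p₂ {false} true
      + t₁.wv p₁ {false} true * t₂.wv p₂ {true} true := by
  unfold PTree.w PTree.wv
  rw [show (∑ c : (PTree.node p₁ p₂ t₁ t₂).Char,
        if (PTree.node p₁ p₂ t₁ t₂).fitch c = ({true, false} : Finset Bool) then (PTree.node p₁ p₂ t₁ t₂).charProb true c else 0)
      = ∑ c₁ : t₁.Char, ∑ c₂ : t₂.Char,
        if (PTree.node p₁ p₂ t₁ t₂).fitch (c₁, c₂) = ({true, false} : Finset Bool) then (PTree.node p₁ p₂ t₁ t₂).charProb true (c₁, c₂) else 0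
      from Fintype.sum_prod_type _]
  have key : ∀ (c₁ : t₁.Char) (c₂ : t₂.Char),
      (if (PTree.node p₁ p₂ t₁ t₂).fitch (c₁, c₂) = ({true, false} : Finset Bool)
        then (PTree.node p₁ p₂ t₁ t₂).charProb true (c₁, c₂) else 0)
      = (if t₁.fitch c₁ = ({true, false} : Finset Bool) then t₁.charProbVia p₁ true c₁ else 0)
          * (if t₂.fitch c₂ = ({true, false} : Finset Bool) then t₂.charProbVia p₂ true c₂ else 0)
        + (if t₁.fitch c₁ = {true} then t₁.charProbVia p₁ true c₁ else 0)
          * (if t₂.fitch c₂ = {false} then t₂.charProbVia p₂ true c₂ else 0)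
        + (if t₁.fitch c₁ = {false} then t₁.charProbVia p₁ true c₁ else 0)
          * (if t₂.fitch c₂ = {true} then t₂.charProbVia p₂ true c₂ else 0) := fun c₁ c₂ =>
    combineB _ _ (t₁.fitch_values c₁) (t₂.fitch_values c₂) _ _
  simp only [key, Finset.sum_add_distrib, ← Finset.mul_sum, ← Finset.sum_mul]

lemma PTree.w_leafT : PTree.leaf.w {true} true = 1 := by
  show (∑ c : Bool, if PTree.leaf.fitch c = {true} then PTree.leaf.charProb true c else 0) = 1
  rw [Fintype.sum_bool]
  simp (config := { decide := true }) [PTree.fitch, PTree.charProb] <;> rfl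

lemma PTree.w_leafF : PTree.leaf.w {false} true = 0 := by
  show (∑ c : Bool, if PTree.leaf.fitch c = {false} then PTree.leaf.charProb true c else 0) = 0
  rw [Fintype.sum_bool]
  simp (config := { decide := true }) [PTree.fitch, PTree.charProb]

lemma PTree.w_leafB : PTree.leaf.w {true, false} true = 0 := by
  show (∑ c : Bool, if PTree.leaf.fitch c = ({true, false} : Finset Bool) then PTree.leaf.charProb true c else 0) = 0
  rw [Fintype.sum_bool]
  simp (config := { decide := true }) [PTree.fitch, PTree.charProb]

/-- Step lemma: the three `w`-values of a node with equal subtrees. -/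
lemma PTree.w_stepT (p : ℝ) (t : PTree) :
    (PTree.node p p t t).w {true} true =
      ((1-p) * t.w {true} true + p * t.w {false} true)^2
      + 2 * ((1-p) * t.w {true} true + p * t.w {false} true) * t.w {true, false} true := by
  rw [PTree.w_nodeT, PTree.wvT, PTree.wvB]; ring

lemma PTree.w_stepF (p : ℝ) (t : PTree) :
    (PTree.node p p t t).w {false} true =
      ((1-p) * t.w {false} true + p * t.w {true} true)^2
      + 2 * ((1-p) * t.w {false} true + p * t.w {true} true) * t.w {true, false} true := by
  rw [PTree.w_nodeF, PTree.wvF, PTree.wvB]; ring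

lemma PTree.w_stepB (p : ℝ) (t : PTree) :
    (PTree.node p p t t).w {true, false} true =
      (t.w {true, false} true)^2
      + 2 * ((1-p) * t.w {true} true + p * t.w {false} true)
          * ((1-p) * t.w {false} true + p * t.w {true} true) := by
  rw [PTree.w_nodeB, PTree.wvT, PTree.wvF, PTree.wvB]; ring

lemma PTree.RAVia_eq (t : PTree) (p : ℝ) :
    t.RAVia p = t.wv p {true} true + t.wv p {true, false} true / 2 := rfl

lemma PTree.RA_eq (t : PTree) :
    t.RA = t.w {true} true + t.w {true, false} true / 2 := rfl

lemma bal1T (q : ℝ) : (balanced q 1).w {true} true = (1) + (-2)*q^1 + (1)*q^2 := by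
  rw [show balanced q 1 = PTree.node q q PTree.leaf PTree.leaf from rfl, PTree.w_stepT,
    PTree.w_leafT, PTree.w_leafF, PTree.w_leafB]; ring
lemma bal1F (q : ℝ) : (balanced q 1).w {false} true = (1)*q^2 := by
  rw [show balanced q 1 = PTree.node q q PTree.leaf PTree.leaf from rfl, PTree.w_stepF,
    PTree.w_leafT, PTree.w_leafF, PTree.w_leafB]; ring
lemma bal1B (q : ℝ) : (balanced q 1).w {true, false} true = (2)*q^1 + (-2)*q^2 := by
  rw [show balanced q 1 = PTree.node q q PTree.leaf PTree.leaf from rfl, PTree.w_stepB,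
    PTree.w_leafT, PTree.w_leafF, PTree.w_leafB]; ring

lemma bal2T (q : ℝ) : (balanced q 2).w {true} true = (1) + (-2)*q^1 + (-1)*q^2 + (6)*q^3 + (-3)*q^4 := by
  rw [show balanced q 2 = PTree.node q q (balanced q 1) (balanced q 1) from rfl, PTree.w_stepT,
    bal1T, bal1F, bal1B]; ring
lemma bal2F (q : ℝ) : (balanced q 2).w {false} true = (5)*q^2 + (-10)*q^3 + (5)*q^4 := by
  rw [show balanced q 2 = PTree.node q q (balanced q 1) (balanced q 1) from rfl, PTree.w_stepF,
    bal1T, bal1F, bal1B]; ring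
lemma bal2B (q : ℝ) : (balanced q 2).w {true, false} true = (2)*q^1 + (-4)*q^2 + (4)*q^3 + (-2)*q^4 := by
  rw [show balanced q 2 = PTree.node q q (balanced q 1) (balanced q 1) from rfl, PTree.w_stepB,
    bal1T, bal1F, bal1B]; ring

lemma bal3T (q : ℝ) : (balanced q 3).w {true} true = (1) + (-2)*q^1 + (-9)*q^2 + (54)*q^3 + (-97)*q^4 + (2)*q^5 + (334)*q^6 + (-704)*q^7 + (693)*q^8 + (-336)*q^9 + (64)*q^10 := by
  rw [show balanced q 3 = PTree.node q q (balanced q 2) (balanced q 2) from rfl, PTree.w_stepT,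
    bal2T, bal2F, bal2B]; ring
lemma bal3F (q : ℝ) : (balanced q 3).w {false} true = (5)*q^2 + (10)*q^3 + (-103)*q^4 + (178)*q^5 + (26)*q^6 + (-424)*q^7 + (549)*q^8 + (-304)*q^9 + (64)*q^10 := by
  rw [show balanced q 3 = PTree.node q q (balanced q 2) (balanced q 2) from rfl, PTree.w_stepF,
    bal2T, bal2F, bal2B]; ring
lemma bal3B (q : ℝ) : (balanced q 3).w {true, false} true = (2)*q^1 + (4)*q^2 + (-64)*q^3 + (200)*q^4 + (-180)*q^5 + (-360)*q^6 + (1128)*q^7 + (-1242)*q^8 + (640)*q^9 + (-128)*q^10 := by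
  rw [show balanced q 3 = PTree.node q q (balanced q 2) (balanced q 2) from rfl, PTree.w_stepB,
    bal2T, bal2F, bal2B]; ring

/-- `RA` via the quantities of the two subtrees hanging off the root. -/
lemma RA_formula (pz py : ℝ) (t : PTree) :
    (PTree.node pz py PTree.leaf t).RA =
      (1 - pz) * ((1 - py) * t.w {true} true + py * t.w {false} true + t.w {true, false} true)
      + ((1 - pz) * ((1 - py) * t.w {false} true + py * t.w {true} true)
         + pz * ((1 - py) * t.w {true} true + py * t.w {false} true)) / 2 := by
  rw [PTree.RA_eq, PTree.w_nodeT, PTree.w_nodeB, PTree.wvT, PTree.wvF, PTree.wvB, PTree.wvT,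
    PTree.wvF, PTree.wvB, PTree.w_leafT, PTree.w_leafF, PTree.w_leafB]
  ring

lemma RAVia_formula (t : PTree) (p : ℝ) :
    t.RAVia p = (1 - p) * t.w {true} true + p * t.w {false} true + t.w {true, false} true / 2 := by
  rw [PTree.RAVia_eq, PTree.wvT, PTree.wvB]

set_option maxHeartbeats 3200000 in
theorem stmt3' (pz : ℝ) (hz0 : 0 < pz) (hz1 : pz < 1/2) :
    ∃ (n : ℕ) (q py : ℝ), 2 ≤ n ∧ 0 < q ∧ q < 1/2 ∧ 0 < py ∧ py < 1/2 ∧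
      (balanced q n).RAVia py > (PTree.node pz py PTree.leaf (balanced q n)).RA ∧
      pz < (1 - (1 - 2*py) * (1 - 2*q)^n) / 2 := by
  have hw : 0 < 1 - 2*pz := by linarith
  have hx : 0 < 2*pz := by linarith
  refine ⟨3, pz * (1 - 2*pz) / 16, pz - (5/32) * pz * (1 - 2*pz)^2, by norm_num, ?_, ?_, ?_, ?_, ?_, ?_⟩
  · positivity
  · nlinarith
  · nlinarith [mul_pos hz0 (mul_pos hw hw), mul_pos hz0 hz0]
  · nlinarith [mul_pos (mul_pos hz0 hw) hw]
  · have hS : (0:ℝ) < (1/64) * ((2*pz)^0 * (1 - 2*pz)^18)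
      + (137/512) * ((2*pz)^1 * (1 - 2*pz)^17)
      + (71187/32768) * ((2*pz)^2 * (1 - 2*pz)^16)
      + (11657549/1048576) * ((2*pz)^3 * (1 - 2*pz)^15)
      + (1349195665/33554432) * ((2*pz)^4 * (1 - 2*pz)^14)
      + (58628488811/536870912) * ((2*pz)^5 * (1 - 2*pz)^13)
      + (3967294162209/17179869184) * ((2*pz)^6 * (1 - 2*pz)^12)
      + (427635968430457/1099511627776) * ((2*pz)^7 * (1 - 2*pz)^11)
      + (2326846590086803/4398046511104) * ((2*pz)^8 * (1 - 2*pz)^10)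
      + (41217227750192607/70368744177664) * ((2*pz)^9 * (1 - 2*pz)^9)
      + (2326846590086803/4398046511104) * ((2*pz)^10 * (1 - 2*pz)^8)
      + (427635968430457/1099511627776) * ((2*pz)^11 * (1 - 2*pz)^7)
      + (3967294162209/17179869184) * ((2*pz)^12 * (1 - 2*pz)^6)
      + (58628488811/536870912) * ((2*pz)^13 * (1 - 2*pz)^5)
      + (1349195665/33554432) * ((2*pz)^14 * (1 - 2*pz)^4)
      + (11657549/1048576) * ((2*pz)^15 * (1 - 2*pz)^3)
      + (71187/32768) * ((2*pz)^16 * (1 - 2*pz)^2)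
      + (137/512) * ((2*pz)^17 * (1 - 2*pz)^1)
      + (1/64) * ((2*pz)^18 * (1 - 2*pz)^0) := by
      repeat' apply add_pos
      all_goals exact mul_pos (by norm_num) (mul_pos (pow_pos hx _) (pow_pos hw _))
    have key : (balanced (pz * (1 - 2*pz) / 16) 3).RAVia (pz - (5/32) * pz * (1 - 2*pz)^2)
        - (PTree.node pz (pz - (5/32) * pz * (1 - 2*pz)^2) PTree.leaf
            (balanced (pz * (1 - 2*pz) / 16) 3)).RA
        = pz * (1 - 2*pz)^2 * ((1/64) * ((2*pz)^0 * (1 - 2*pz)^18)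
      + (137/512) * ((2*pz)^1 * (1 - 2*pz)^17)
      + (71187/32768) * ((2*pz)^2 * (1 - 2*pz)^16)
      + (11657549/1048576) * ((2*pz)^3 * (1 - 2*pz)^15)
      + (1349195665/33554432) * ((2*pz)^4 * (1 - 2*pz)^14)
      + (58628488811/536870912) * ((2*pz)^5 * (1 - 2*pz)^13)
      + (3967294162209/17179869184) * ((2*pz)^6 * (1 - 2*pz)^12)
      + (427635968430457/1099511627776) * ((2*pz)^7 * (1 - 2*pz)^11)
      + (2326846590086803/4398046511104) * ((2*pz)^8 * (1 - 2*pz)^10)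
      + (41217227750192607/70368744177664) * ((2*pz)^9 * (1 - 2*pz)^9)
      + (2326846590086803/4398046511104) * ((2*pz)^10 * (1 - 2*pz)^8)
      + (427635968430457/1099511627776) * ((2*pz)^11 * (1 - 2*pz)^7)
      + (3967294162209/17179869184) * ((2*pz)^12 * (1 - 2*pz)^6)
      + (58628488811/536870912) * ((2*pz)^13 * (1 - 2*pz)^5)
      + (1349195665/33554432) * ((2*pz)^14 * (1 - 2*pz)^4)
      + (11657549/1048576) * ((2*pz)^15 * (1 - 2*pz)^3)
      + (71187/32768) * ((2*pz)^16 * (1 - 2*pz)^2)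
      + (137/512) * ((2*pz)^17 * (1 - 2*pz)^1)
      + (1/64) * ((2*pz)^18 * (1 - 2*pz)^0)) := by
      rw [RAVia_formula, RA_formula, bal3T, bal3F, bal3B]
      ring
    have hpos : 0 < pz * (1 - 2*pz)^2 * ((1/64) * ((2*pz)^0 * (1 - 2*pz)^18)
      + (137/512) * ((2*pz)^1 * (1 - 2*pz)^17)
      + (71187/32768) * ((2*pz)^2 * (1 - 2*pz)^16)
      + (11657549/1048576) * ((2*pz)^3 * (1 - 2*pz)^15)
      + (1349195665/33554432) * ((2*pz)^4 * (1 - 2*pz)^14)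
      + (58628488811/536870912) * ((2*pz)^5 * (1 - 2*pz)^13)
      + (3967294162209/17179869184) * ((2*pz)^6 * (1 - 2*pz)^12)
      + (427635968430457/1099511627776) * ((2*pz)^7 * (1 - 2*pz)^11)
      + (2326846590086803/4398046511104) * ((2*pz)^8 * (1 - 2*pz)^10)
      + (41217227750192607/70368744177664) * ((2*pz)^9 * (1 - 2*pz)^9)
      + (2326846590086803/4398046511104) * ((2*pz)^10 * (1 - 2*pz)^8)
      + (427635968430457/1099511627776) * ((2*pz)^11 * (1 - 2*pz)^7)
      + (3967294162209/17179869184) * ((2*pz)^12 * (1 - 2*pz)^6)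
      + (58628488811/536870912) * ((2*pz)^13 * (1 - 2*pz)^5)
      + (1349195665/33554432) * ((2*pz)^14 * (1 - 2*pz)^4)
      + (11657549/1048576) * ((2*pz)^15 * (1 - 2*pz)^3)
      + (71187/32768) * ((2*pz)^16 * (1 - 2*pz)^2)
      + (137/512) * ((2*pz)^17 * (1 - 2*pz)^1)
      + (1/64) * ((2*pz)^18 * (1 - 2*pz)^0)) := mul_pos (mul_pos hz0 (pow_pos hw 2)) hS
    linarith [key, hpos]
  · have hS : (0:ℝ) < (1/32) * ((2*pz)^0 * (1 - 2*pz)^6)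
      + (105/512) * ((2*pz)^1 * (1 - 2*pz)^5)
      + (4403/8192) * ((2*pz)^2 * (1 - 2*pz)^4)
      + (95333/131072) * ((2*pz)^3 * (1 - 2*pz)^3)
      + (4403/8192) * ((2*pz)^4 * (1 - 2*pz)^2)
      + (105/512) * ((2*pz)^5 * (1 - 2*pz)^1)
      + (1/32) * ((2*pz)^6 * (1 - 2*pz)^0) := by
      repeat' apply add_pos
      all_goals exact mul_pos (by norm_num) (mul_pos (pow_pos hx _) (pow_pos hw _))
    have key : (1 - (1 - 2*(pz - (5/32) * pz * (1 - 2*pz)^2)) * (1 - 2*(pz * (1 - 2*pz) / 16))^3) / 2 - pz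
        = pz * (1 - 2*pz)^2 * ((1/32) * ((2*pz)^0 * (1 - 2*pz)^6)
      + (105/512) * ((2*pz)^1 * (1 - 2*pz)^5)
      + (4403/8192) * ((2*pz)^2 * (1 - 2*pz)^4)
      + (95333/131072) * ((2*pz)^3 * (1 - 2*pz)^3)
      + (4403/8192) * ((2*pz)^4 * (1 - 2*pz)^2)
      + (105/512) * ((2*pz)^5 * (1 - 2*pz)^1)
      + (1/32) * ((2*pz)^6 * (1 - 2*pz)^0)) := by
      ring
    have hpos : 0 < pz * (1 - 2*pz)^2 * ((1/32) * ((2*pz)^0 * (1 - 2*pz)^6)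
      + (105/512) * ((2*pz)^1 * (1 - 2*pz)^5)
      + (4403/8192) * ((2*pz)^2 * (1 - 2*pz)^4)
      + (95333/131072) * ((2*pz)^3 * (1 - 2*pz)^3)
      + (4403/8192) * ((2*pz)^4 * (1 - 2*pz)^2)
      + (105/512) * ((2*pz)^5 * (1 - 2*pz)^1)
      + (1/32) * ((2*pz)^6 * (1 - 2*pz)^0)) := mul_pos (mul_pos hz0 (pow_pos hw 2)) hS
    linarith [key, hpos]

/-- existence of a misleading taxon: for any `p_z` with
`0 < p_z < 1/2` there are `n ≥ 2` and substitution probabilities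
`q, p_y ∈ (0, 1/2)` such that, for the tree `T` whose root `ρ` has a single
leaf `z` attached by an edge of substitution probability `p_z` and the
balanced binary tree of depth `n` (probability `q` on every edge) attached by
an edge of substitution probability `p_y`: (1) the substitution probability
from `ρ` to `z` is `p_z` (built into the construction); (2) the reconstruction
accuracy based on `Y` (the leaves of the balanced subtree, root state
estimated at `ρ`) exceeds that based on all of `X = Y ∪ {z}`; and (3) the net
substitution probability from `ρ` to every leaf `v ≠ z`, namely
`(1 − (1−2p_y)(1−2q)^n)/2`, is strictly greater than `p_z`. -/
theorem stmt3 (pz : ℝ) (hz0 : 0 < pz) (hz1 : pz < 1/2) :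
    ∃ (n : ℕ) (q py : ℝ), 2 ≤ n ∧ 0 < q ∧ q < 1/2 ∧ 0 < py ∧ py < 1/2 ∧
      (balanced q n).RAVia py > (PTree.node pz py PTree.leaf (balanced q n)).RA ∧
      pz < (1 - (1 - 2*py) * (1 - 2*q)^n) / 2 := by
  exact stmt3' pz hz0 hz1
end

section
/- For the tree T whose root ρ has a single leaf z attached by an edge of substitution probability p_z and the root y of a balanced binary tree T_Y of depth n (substitution probability q on every edge) attached by an edge of substitution probability p_y, with X = Y ∪ {z}, the reconstruction accuracy on all taxa equals RA(X) = (1−p_z)·[(1−p_y)·P_α(n,q) + p_y·P_β(n,q) + P_{αβ}(n,q)] + (1/2)·p_z·[(1−p_y)·P_α(n,q) + p_y·P_β(n,q)] + (1/2)·(1−p_z)·[p_y·P_α(n,q) + (1−p_y)·P_β(n,q)]. -/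
namespace PTree

def flip_s4 : (t : PTree) → t.Char → t.Char
  | .leaf, c => !c
  | .node _ _ t₁ t₂, c => (flip_s4 t₁ c.1, flip_s4 t₂ c.2)

@[simp] lemma flip_node (p₁ p₂ : ℝ) (t₁ t₂ : PTree) (c : (node p₁ p₂ t₁ t₂).Char) :
    (node p₁ p₂ t₁ t₂).flip_s4 c = (t₁.flip_s4 c.1, t₂.flip_s4 c.2) := rfl

@[simp] lemma flip_leaf (c : leaf.Char) : leaf.flip_s4 c = !c := rfl

lemma flip_flip_s4 : (t : PTree) → ∀ c, t.flip_s4 (t.flip_s4 c) = c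
  | .leaf, c => Bool.not_not c
  | .node _ _ t₁ t₂, c => by
      simp only [flip_node, flip_flip_s4 t₁ c.1, flip_flip_s4 t₂ c.2]
      exact (congrArg₂ Prod.mk (flip_flip_s4 t₁ c.1) (flip_flip_s4 t₂ c.2)).trans Prod.mk.eta

lemma charProb_flip_s4 : (t : PTree) → ∀ s c, t.charProb s c = t.charProb (!s) (t.flip_s4 c)
  | .leaf, s, c => by
      cases s <;> cases c <;> rfl
  | .node p₁ p₂ t₁ t₂, s, c => by
      have h1 := charProb_flip_s4 t₁
      have h2 := charProb_flip_s4 t₂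
      show (_ * _ : ℝ) = _ * _
      simp only [flip_node]
      congr 1
      · rw [Fintype.sum_bool, Fintype.sum_bool,
          show t₁.charProb true (t₁.flip_s4 c.1) = t₁.charProb false c.1 from (h1 false c.1).symm,
          show t₁.charProb false (t₁.flip_s4 c.1) = t₁.charProb true c.1 from (h1 true c.1).symm]
        cases s <;> simp [transProb] <;> ring
      · rw [Fintype.sum_bool, Fintype.sum_bool,
          show t₂.charProb true (t₂.flip_s4 c.2) = t₂.charProb false c.2 from (h2 false c.2).symm,
          show t₂.charProb false (t₂.flip_s4 c.2) = t₂.charProb true c.2 from (h2 true c.2).symm]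
        cases s <;> simp [transProb] <;> ring

lemma fitch_flip_s4 : (t : PTree) → ∀ c, t.fitch (t.flip_s4 c) = (t.fitch c).image Bool.not
  | .leaf, c => by
      cases c <;> decide
  | .node p₁ p₂ t₁ t₂, c => by
      show (if _ then _ else _) = _
      simp only [flip_node]
      simp only [show (t₁.fitch (t₁.flip_s4 c.1)) = (t₁.fitch c.1).image Bool.not from fitch_flip_s4 t₁ c.1,
        show (t₂.fitch (t₂.flip_s4 c.2)) = (t₂.fitch c.2).image Bool.not from fitch_flip_s4 t₂ c.2]
      have hinj : Function.Injective Bool.not := fun a b h => by cases a <;> cases b <;> simp_all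
      rw [← Finset.image_inter _ _ hinj, ← Finset.image_union]
      rw [show PTree.fitch (.node p₁ p₂ t₁ t₂) c
          = (if (t₁.fitch c.1 ∩ t₂.fitch c.2).Nonempty then t₁.fitch c.1 ∩ t₂.fitch c.2
             else t₁.fitch c.1 ∪ t₂.fitch c.2) from rfl]
      by_cases h : (t₁.fitch c.1 ∩ t₂.fitch c.2).Nonempty
      · rw [if_pos h, if_pos]; rwa [Finset.image_nonempty]
      · rw [if_neg h, if_neg]; rwa [Finset.image_nonempty]

lemma fitch_nonempty : (t : PTree) → ∀ c, (t.fitch c).Nonempty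
  | .leaf, c => ⟨c, Finset.mem_singleton_self (α := Bool) c⟩
  | .node p₁ p₂ t₁ t₂, c => by
      rw [show PTree.fitch (.node p₁ p₂ t₁ t₂) c
          = (if (t₁.fitch c.1 ∩ t₂.fitch c.2).Nonempty then t₁.fitch c.1 ∩ t₂.fitch c.2
             else t₁.fitch c.1 ∪ t₂.fitch c.2) from rfl]
      by_cases h : (t₁.fitch c.1 ∩ t₂.fitch c.2).Nonempty
      · rwa [if_pos h]
      · rw [if_neg h]; exact (fitch_nonempty t₁ c.1).mono Finset.subset_union_left

lemma sum_flip_s4 (t : PTree) (F : Finset Bool) :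
    (∑ c : t.Char, if t.fitch c = F then t.charProb false c else 0)
    = ∑ c : t.Char, if t.fitch c = F.image Bool.not then t.charProb true c else 0 := by
  have hbij : Function.Bijective t.flip_s4 :=
    Function.Involutive.bijective (fun c => t.flip_flip_s4 c)
  refine Fintype.sum_bijective t.flip_s4 hbij _ _ (fun c => ?_)
  rw [fitch_flip_s4, charProb_flip_s4 t false c, Bool.not_false]
  congr 1
  have himg : ∀ G : Finset Bool, (G.image Bool.not).image Bool.not = G := by decide
  rw [eq_iff_iff]
  constructor <;> intro h
  · rw [h]
  · rw [← himg (t.fitch c), h, himg]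

end PTree

namespace PTree

lemma sum_char_node (p₁ p₂ : ℝ) (t₁ t₂ : PTree) (f : (node p₁ p₂ t₁ t₂).Char → ℝ) :
    ∑ c : (node p₁ p₂ t₁ t₂).Char, f c = ∑ c₁ : t₁.Char, ∑ c₂ : t₂.Char, f (c₁, c₂) := by
  letI := PTree.Char.instFintype t₁
  letI := PTree.Char.instFintype t₂
  exact Fintype.sum_prod_type (f := fun x : t₁.Char × t₂.Char => f x)

lemma sum_leaf (f : leaf.Char → ℝ) : ∑ c : leaf.Char, f c = f true + f false :=
  Fintype.sum_bool f

lemma sum_ite_lin (t : PTree) (F0 : Finset Bool) (u v : ℝ) :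
    (∑ c : t.Char, if t.fitch c = F0 then u * t.charProb true c + v * t.charProb false c else 0)
    = u * (∑ c : t.Char, if t.fitch c = F0 then t.charProb true c else 0)
    + v * (∑ c : t.Char, if t.fitch c = F0 then t.charProb false c else 0) := by
  rw [Finset.mul_sum, Finset.mul_sum, ← Finset.sum_add_distrib]
  refine Finset.sum_congr rfl fun c _ => ?_
  split_ifs <;> simp

end PTree

/-- for the tree whose root has a single leaf `z` (edge
probability `p_z`) and the balanced tree of depth `n` with probability `q` on
every edge (attached by an edge of probability `p_y`), the reconstruction
accuracy on the full leaf set `X` is given by the stated formula. -/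
theorem stmt4 (n : ℕ) (q pz py : ℝ)
    (hq : 0 ≤ q ∧ q ≤ 1/2) (hz : 0 ≤ pz ∧ pz ≤ 1/2) (hy : 0 ≤ py ∧ py ≤ 1/2) :
    (PTree.node pz py PTree.leaf (balanced q n)).RA =
      (1 - pz) * ((1 - py) * Palpha n q + py * Pbeta n q + Palphabeta n q)
      + (1/2) * pz * ((1 - py) * Palpha n q + py * Pbeta n q)
      + (1/2) * (1 - pz) * (py * Palpha n q + (1 - py) * Pbeta n q) := by
  classical
  set T := balanced q n with hT
  set g : T.Char → ℝ := fun c => (1 - py) * T.charProb true c + py * T.charProb false c with hg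
  have hcase : ∀ F : Finset Bool, F.Nonempty → F = {true} ∨ F = {false} ∨ F = {true, false} := by
    decide
  -- character probability on the node tree
  have hcpt : ∀ c : T.Char,
      (PTree.node pz py PTree.leaf T).charProb true (true, c) = (1 - pz) * g c := by
    intro c
    show (∑ s₁ : Bool, transProb pz true s₁ * PTree.leaf.charProb s₁ true) *
         (∑ s₂ : Bool, transProb py true s₂ * T.charProb s₂ c) = _
    rw [Fintype.sum_bool, Fintype.sum_bool]
    simp [transProb, PTree.charProb, hg]
    exact Or.inl (mul_one _)
  have hcpf : ∀ c : T.Char,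
      (PTree.node pz py PTree.leaf T).charProb true (false, c) = pz * g c := by
    intro c
    show (∑ s₁ : Bool, transProb pz true s₁ * PTree.leaf.charProb s₁ false) *
         (∑ s₂ : Bool, transProb py true s₂ * T.charProb s₂ c) = _
    rw [Fintype.sum_bool, Fintype.sum_bool]
    simp [transProb, PTree.charProb, hg]
    exact Or.inl (mul_one _)
  have hfitch : ∀ (b : Bool) (c : T.Char),
      (PTree.node pz py PTree.leaf T).fitch (b, c)
      = if (({b} : Finset Bool) ∩ T.fitch c).Nonempty then ({b} : Finset Bool) ∩ T.fitch c
        else ({b} : Finset Bool) ∪ T.fitch c := fun b c => rfl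
  -- sums over the subtree with "false" root state, via symmetry
  have hBf : (∑ c : T.Char, if T.fitch c = {true} then T.charProb false c else 0)
      = Pbeta n q := by
    rw [PTree.sum_flip_s4, show ({true} : Finset Bool).image Bool.not = {false} from by decide]
    rfl
  have hAf : (∑ c : T.Char, if T.fitch c = {false} then T.charProb false c else 0)
      = Palpha n q := by
    rw [PTree.sum_flip_s4, show ({false} : Finset Bool).image Bool.not = {true} from by decide]
    rfl
  have hCf : (∑ c : T.Char, if T.fitch c = {true, false} then T.charProb false c else 0)
      = Palphabeta n q := by
    rw [PTree.sum_flip_s4,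
      show ({true, false} : Finset Bool).image Bool.not = {true, false} from by decide]
    rfl
  -- the three basic g-sums
  have hSA : (∑ c : T.Char, if T.fitch c = {true} then g c else 0)
      = (1 - py) * Palpha n q + py * Pbeta n q := by
    rw [hg, PTree.sum_ite_lin, hBf]; rfl
  have hSB : (∑ c : T.Char, if T.fitch c = {false} then g c else 0)
      = (1 - py) * Pbeta n q + py * Palpha n q := by
    rw [hg, PTree.sum_ite_lin, hAf]; rfl
  have hSC : (∑ c : T.Char, if T.fitch c = {true, false} then g c else 0)
      = (1 - py) * Palphabeta n q + py * Palphabeta n q := by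
    rw [hg, PTree.sum_ite_lin, hCf]; rfl
  -- probAlpha of the node tree
  have hPA : (PTree.node pz py PTree.leaf T).probAlpha
      = (1 - pz) * (((1 - py) * Palpha n q + py * Pbeta n q)
          + ((1 - py) * Palphabeta n q + py * Palphabeta n q)) := by
    show (∑ c : (PTree.node pz py PTree.leaf T).Char,
        if (PTree.node pz py PTree.leaf T).fitch c = {true}
        then (PTree.node pz py PTree.leaf T).charProb true c else 0) = _
    rw [PTree.sum_char_node, PTree.sum_leaf]
    have h1 : (∑ c : T.Char, if (PTree.node pz py PTree.leaf T).fitch (true, c) = {true}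
        then (PTree.node pz py PTree.leaf T).charProb true (true, c) else 0)
        = (1 - pz) * ∑ c : T.Char, ((if T.fitch c = {true} then g c else 0)
            + (if T.fitch c = {true, false} then g c else 0)) := by
      rw [Finset.mul_sum]
      refine Finset.sum_congr rfl fun c _ => ?_
      rw [hcpt, hfitch]
      rcases hcase _ (T.fitch_nonempty c) with h | h | h <;> rw [h]
      · rw [if_pos (by decide), if_pos rfl, if_neg (by decide)]; ring
      · rw [if_neg (by decide), if_neg (by decide), if_neg (by decide)]; ring
      · rw [if_pos (by decide), if_neg (by decide), if_pos rfl]; ring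
    have h0 : (∑ c : T.Char, if (PTree.node pz py PTree.leaf T).fitch (false, c) = {true}
        then (PTree.node pz py PTree.leaf T).charProb true (false, c) else 0) = 0 := by
      refine Finset.sum_eq_zero fun c _ => ?_
      rw [hfitch]
      rcases hcase _ (T.fitch_nonempty c) with h | h | h <;> rw [h]
      · rw [if_neg (by decide)]
      · rw [if_neg (by decide)]
      · rw [if_neg (by decide)]
    rw [h1, h0, Finset.sum_add_distrib, hSA, hSC, add_zero]
  -- probBoth of the node tree
  have hPB : (PTree.node pz py PTree.leaf T).probBoth
      = (1 - pz) * ((1 - py) * Pbeta n q + py * Palpha n q)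
        + pz * ((1 - py) * Palpha n q + py * Pbeta n q) := by
    show (∑ c : (PTree.node pz py PTree.leaf T).Char,
        if (PTree.node pz py PTree.leaf T).fitch c = ({true, false} : Finset Bool)
        then (PTree.node pz py PTree.leaf T).charProb true c else 0) = _
    rw [PTree.sum_char_node, PTree.sum_leaf]
    have h1 : (∑ c : T.Char,
        if (PTree.node pz py PTree.leaf T).fitch (true, c) = ({true, false} : Finset Bool)
        then (PTree.node pz py PTree.leaf T).charProb true (true, c) else 0)
        = (1 - pz) * ∑ c : T.Char, (if T.fitch c = {false} then g c else 0) := by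
      rw [Finset.mul_sum]
      refine Finset.sum_congr rfl fun c _ => ?_
      rw [hcpt, hfitch]
      rcases hcase _ (T.fitch_nonempty c) with h | h | h <;> rw [h]
      · rw [if_neg (by decide), if_neg (by decide)]; ring
      · rw [if_pos (by decide), if_pos rfl]
      · rw [if_neg (by decide), if_neg (by decide)]; ring
    have h2 : (∑ c : T.Char,
        if (PTree.node pz py PTree.leaf T).fitch (false, c) = ({true, false} : Finset Bool)
        then (PTree.node pz py PTree.leaf T).charProb true (false, c) else 0)
        = pz * ∑ c : T.Char, (if T.fitch c = {true} then g c else 0) := by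
      rw [Finset.mul_sum]
      refine Finset.sum_congr rfl fun c _ => ?_
      rw [hcpf, hfitch]
      rcases hcase _ (T.fitch_nonempty c) with h | h | h <;> rw [h]
      · rw [if_pos (by decide), if_pos rfl]
      · rw [if_neg (by decide), if_neg (by decide)]; ring
      · rw [if_neg (by decide), if_neg (by decide)]; ring
    rw [h1, h2, hSA, hSB]
  show (PTree.node pz py PTree.leaf T).probAlpha
      + (PTree.node pz py PTree.leaf T).probBoth / 2 = _
  rw [hPA, hPB]; ring
end

section
/- Let T be a rooted binary tree whose root ρ has children y₁ and y₂ with edge substitution probabilities p₁ and p₂, and let Y₁, Y₂ be the leaf sets of the subtrees rooted at y₁, y₂, with X = Y₁ ∪ Y₂. With P_i = 1 − 2p_i, the Fitch probabilities satisfy the recursion P_α(X) = [((1+P₁)/2)·P_α(Y₁) + ((1−P₁)/2)·P_β(Y₁)]·[((1+P₂)/2)·P_α(Y₂) + ((1−P₂)/2)·P_β(Y₂)] + P_{αβ}(Y₁)·[((1+P₂)/2)·P_α(Y₂) + ((1−P₂)/2)·P_β(Y₂)] + [((1+P₁)/2)·P_α(Y₁) + ((1−P₁)/2)·P_β(Y₁)]·P_{αβ}(Y₂).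 -/
/-! Auxiliary machinery for the recursion. -/

/-- The "not" embedding on `Bool`. -/
def notEmb : Bool ↪ Bool := ⟨Bool.not, by decide⟩

/-- Flip all leaf states of a character. -/
def PTree.flipChar : (t : PTree) → t.Char → t.Char
  | .leaf, c => !c
  | .node _ _ _ _, c => (PTree.flipChar _ c.1, PTree.flipChar _ c.2)

lemma PTree.flipChar_flipChar : (t : PTree) → ∀ c, t.flipChar (t.flipChar c) = c
  | .leaf, c => by simp [PTree.flipChar]; exact Bool.not_not (c : Bool)
  | .node p₁ p₂ t₁ t₂, c => by
      simp [PTree.flipChar, t₁.flipChar_flipChar, t₂.flipChar_flipChar]; rfl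

lemma PTree.flipChar_bijective (t : PTree) : Function.Bijective t.flipChar :=
  Function.Involutive.bijective t.flipChar_flipChar

lemma transProb_not (p : ℝ) (s s' : Bool) : transProb p s (!s') = transProb p (!s) s' := by
  cases s <;> cases s' <;> simp [transProb]

lemma PTree.charProb_flipChar : (t : PTree) → ∀ (s : Bool) (c : t.Char),
    t.charProb s (t.flipChar c) = t.charProb (!s) c
  | .leaf, s, c => by cases s <;> cases c <;> simp [PTree.charProb, PTree.flipChar] <;> rfl
  | .node p₁ p₂ t₁ t₂, s, c => by
      simp only [PTree.charProb, PTree.flipChar, Fintype.sum_bool,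
        t₁.charProb_flipChar, t₂.charProb_flipChar]
      cases s <;> simp [transProb] <;> ring_nf

lemma PTree.fitch_flipChar : (t : PTree) → ∀ c, t.fitch (t.flipChar c) = (t.fitch c).map notEmb
  | .leaf, c => by simp [PTree.fitch, PTree.flipChar, notEmb]; exact (Finset.map_singleton notEmb (c : Bool)).symm
  | .node p₁ p₂ t₁ t₂, c => by
      simp only [PTree.fitch, PTree.flipChar, t₁.fitch_flipChar, t₂.fitch_flipChar,
        ← Finset.map_inter, ← Finset.map_union, Finset.map_nonempty]
      split <;> rfl

/-- Conditional probability that Fitch returns `S`, given root state `s`. -/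
noncomputable def PTree.fitchProb (t : PTree) (s : Bool) (S : Finset Bool) : ℝ :=
  ∑ c : t.Char, if t.fitch c = S then t.charProb s c else 0

lemma PTree.fitchProb_false (t : PTree) (S : Finset Bool) :
    t.fitchProb false S = t.fitchProb true (S.map notEmb) := by
  unfold PTree.fitchProb
  rw [← Fintype.sum_bijective t.flipChar t.flipChar_bijective]
  intro c
  rw [t.fitch_flipChar, t.charProb_flipChar]
  have hmm : ∀ A : Finset Bool, (A.map notEmb).map notEmb = A := by decide
  by_cases h : t.fitch c = S.map notEmb
  · rw [if_pos h, if_pos (by rw [h, hmm]), Bool.not_false]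
  · rw [if_neg h, if_neg fun hc => h (by rw [← hc, hmm])]

lemma PTree.fitch_nonempty_s9 : (t : PTree) → ∀ c, (t.fitch c).Nonempty
  | .leaf, c => by simp [PTree.fitch]; exact Finset.singleton_nonempty _
  | .node p₁ p₂ t₁ t₂, c => by
      simp only [PTree.fitch]
      split
      · assumption
      · exact (t₁.fitch_nonempty_s9 c.1).mono Finset.subset_union_left

lemma bool_finset_cases (S : Finset Bool) (h : S.Nonempty) :
    S = {true} ∨ S = {false} ∨ S = ({true, false} : Finset Bool) := by
  revert h; revert S; decide

lemma fitch_case_split (S₁ S₂ : Finset Bool) (h₁ : S₁.Nonempty) (h₂ : S₂.Nonempty) (v : ℝ) :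
    (if (if (S₁ ∩ S₂).Nonempty then S₁ ∩ S₂ else S₁ ∪ S₂) = {true} then v else 0)
    = (if S₁ = {true} then (1:ℝ) else 0) * (if S₂ = {true} then (1:ℝ) else 0) * v
      + (if S₁ = ({true, false} : Finset Bool) then (1:ℝ) else 0) *
          (if S₂ = {true} then (1:ℝ) else 0) * v
      + (if S₁ = {true} then (1:ℝ) else 0) *
          (if S₂ = ({true, false} : Finset Bool) then (1:ℝ) else 0) * v := by
  rcases bool_finset_cases S₁ h₁ with h | h | h <;>
    rcases bool_finset_cases S₂ h₂ with h' | h' | h' <;>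
      subst h <;> subst h' <;>
        norm_num [show (({true} : Finset Bool) ∩ {true}) = {true} from by decide,
          show (({true} : Finset Bool) ∩ {false}) = ∅ from by decide,
          show (({false} : Finset Bool) ∩ {true}) = ∅ from by decide,
          show (({true} : Finset Bool) ∩ {true, false}) = {true} from by decide,
          show (({true, false} : Finset Bool) ∩ {true}) = {true} from by decide,
          show (({false} : Finset Bool) ∩ {false}) = {false} from by decide,
          show (({false} : Finset Bool) ∩ {true, false}) = {false} from by decide,
          show (({true, false} : Finset Bool) ∩ {false}) = {false} from by decide,
          show (({true, false} : Finset Bool) ∩ ({true, false} : Finset Bool))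
              = {true, false} from by decide,
          show (({true} : Finset Bool) ∪ {false}) = {true, false} from by decide,
          show (({false} : Finset Bool) ∪ {true}) = {true, false} from by decide,
          show (({true} : Finset Bool) : Finset Bool) ≠ ∅ from by decide,
          show (({true} : Finset Bool)) ≠ {true, false} from by decide,
          show (({false} : Finset Bool)) ≠ {true, false} from by decide,
          show (({false} : Finset Bool)) ≠ {true} from by decide,
          show (({true, false} : Finset Bool)) ≠ {true} from by decide,
          show (({false} : Finset Bool)) ≠ {true} from by decide,
          show (({true, false} : Finset Bool)) ≠ {false} from by decide,
          show (({true} : Finset Bool)) ≠ {false} from by decide,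
          Finset.nonempty_iff_ne_empty]

lemma edge_sum (t : PTree) (p : ℝ) (A : Finset Bool) :
    (∑ c : t.Char, (if t.fitch c = A then (1:ℝ) else 0) *
        ∑ s' : Bool, transProb p true s' * t.charProb s' c)
    = (1 - p) * t.fitchProb true A + p * t.fitchProb false A := by
  simp only [Fintype.sum_bool, transProb]
  simp only [PTree.fitchProb, Finset.mul_sum]
  rw [← Finset.sum_add_distrib]
  refine Finset.sum_congr rfl fun c _ => ?_
  split <;> simp <;> ring

/-- recursion for `P_α` at the root in terms of the two root
subtrees, where the root is joined to the subtree roots by edges of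
substitution probabilities `p₁`, `p₂` and `P_i = 1 − 2p_i`. -/
theorem stmt9 (p₁ p₂ : ℝ) (t₁ t₂ : PTree)
    (h₁ : 0 ≤ p₁ ∧ p₁ ≤ 1/2) (h₂ : 0 ≤ p₂ ∧ p₂ ≤ 1/2)
    (hv₁ : t₁.valid) (hv₂ : t₂.valid) :
    (PTree.node p₁ p₂ t₁ t₂).probAlpha =
      ((1 + (1 - 2*p₁))/2 * t₁.probAlpha + (1 - (1 - 2*p₁))/2 * t₁.probBeta) *
        ((1 + (1 - 2*p₂))/2 * t₂.probAlpha + (1 - (1 - 2*p₂))/2 * t₂.probBeta)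
      + t₁.probBoth *
        ((1 + (1 - 2*p₂))/2 * t₂.probAlpha + (1 - (1 - 2*p₂))/2 * t₂.probBeta)
      + ((1 + (1 - 2*p₁))/2 * t₁.probAlpha + (1 - (1 - 2*p₁))/2 * t₁.probBeta) *
        t₂.probBoth := by
  have hmap1 : ({true} : Finset Bool).map notEmb = {false} := by decide
  have hmap2 : (({true, false} : Finset Bool)).map notEmb = ({true, false} : Finset Bool) := by
    decide
  have hf1 : ∀ t : PTree, t.fitchProb false {true} = t.probBeta := by
    intro t; rw [t.fitchProb_false, hmap1]; rfl
  have hf2 : ∀ t : PTree,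
      t.fitchProb false ({true, false} : Finset Bool) = t.probBoth := by
    intro t; rw [t.fitchProb_false, hmap2]; rfl
  have hfa : ∀ t : PTree, t.fitchProb true {true} = t.probAlpha := fun _ => rfl
  have hfb : ∀ t : PTree,
      t.fitchProb true ({true, false} : Finset Bool) = t.probBoth := fun _ => rfl
  have main : (PTree.node p₁ p₂ t₁ t₂).probAlpha =
      ((1 - p₁) * t₁.fitchProb true {true} + p₁ * t₁.fitchProb false {true}) *
        ((1 - p₂) * t₂.fitchProb true {true} + p₂ * t₂.fitchProb false {true})
      + ((1 - p₁) * t₁.fitchProb true ({true, false} : Finset Bool)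
            + p₁ * t₁.fitchProb false ({true, false} : Finset Bool)) *
        ((1 - p₂) * t₂.fitchProb true {true} + p₂ * t₂.fitchProb false {true})
      + ((1 - p₁) * t₁.fitchProb true {true} + p₁ * t₁.fitchProb false {true}) *
        ((1 - p₂) * t₂.fitchProb true ({true, false} : Finset Bool)
            + p₂ * t₂.fitchProb false ({true, false} : Finset Bool)) := by
    unfold PTree.probAlpha
    show (∑ c : t₁.Char × t₂.Char,
        if (PTree.node p₁ p₂ t₁ t₂).fitch c = {true}
        then (PTree.node p₁ p₂ t₁ t₂).charProb true c else 0) = _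
    rw [Fintype.sum_prod_type]
    have step : ∀ (c₁ : t₁.Char) (c₂ : t₂.Char),
        (if (PTree.node p₁ p₂ t₁ t₂).fitch (c₁, c₂) = {true}
          then (PTree.node p₁ p₂ t₁ t₂).charProb true (c₁, c₂) else 0)
        = ((if t₁.fitch c₁ = {true} then (1:ℝ) else 0) *
              ∑ s' : Bool, transProb p₁ true s' * t₁.charProb s' c₁) *
            ((if t₂.fitch c₂ = {true} then (1:ℝ) else 0) *
              ∑ s' : Bool, transProb p₂ true s' * t₂.charProb s' c₂)
          + ((if t₁.fitch c₁ = ({true, false} : Finset Bool) then (1:ℝ) else 0) *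
              ∑ s' : Bool, transProb p₁ true s' * t₁.charProb s' c₁) *
            ((if t₂.fitch c₂ = {true} then (1:ℝ) else 0) *
              ∑ s' : Bool, transProb p₂ true s' * t₂.charProb s' c₂)
          + ((if t₁.fitch c₁ = {true} then (1:ℝ) else 0) *
              ∑ s' : Bool, transProb p₁ true s' * t₁.charProb s' c₁) *
            ((if t₂.fitch c₂ = ({true, false} : Finset Bool) then (1:ℝ) else 0) *
              ∑ s' : Bool, transProb p₂ true s' * t₂.charProb s' c₂) := by
      intro c₁ c₂
      show (if (if (t₁.fitch c₁ ∩ t₂.fitch c₂).Nonempty then t₁.fitch c₁ ∩ t₂.fitch c₂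
              else t₁.fitch c₁ ∪ t₂.fitch c₂) = {true}
          then (∑ s' : Bool, transProb p₁ true s' * t₁.charProb s' c₁) *
            (∑ s' : Bool, transProb p₂ true s' * t₂.charProb s' c₂) else 0) = _
      rw [fitch_case_split _ _ (t₁.fitch_nonempty_s9 c₁) (t₂.fitch_nonempty_s9 c₂)]
      ring
    simp only [step]
    simp only [Finset.sum_add_distrib]
    rw [← Finset.sum_mul_sum, ← Finset.sum_mul_sum, ← Finset.sum_mul_sum,
      edge_sum, edge_sum, edge_sum, edge_sum]
  rw [main, hf1, hf1, hf2, hf2, hfa, hfa, hfb, hfb]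
  ring
end
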